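/- Let G be a 2-connected graph with no k-wheel minor, let C be a cycle (or edge) in G with at most k − 1 vertices, and let M be a connected subgraph of G − V(C′) where C′ is a cycle in G containing V(C) and disjoint from M with N_G(V(M)) ⊆ V(C′). Then |N_G(V(M))| ≤ k − 1. -/

import Mathlib

open SimpleGraph

/-- A tree-decomposition of the graph `G` over the tree `τ` with bags `X`. -/
structure IsTreeDecomp {V : Type} {T : Type} (G : SimpleGraph V) (τ : SimpleGraph T)
    (X : T → Set V) : Prop where
  isTree : τ.IsTree
  coverV : ∀ v : V, ∃ t, v ∈ X t
  coverE : ∀ ⦃u v : V⦄, G.Adj u v → ∃ t, u ∈ X t ∧ v ∈ X t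
  subtreeConn : ∀ v : V, (τ.induce {t | v ∈ X t}).Connected

/-- The graph `G` has tree-width at most `w`. -/
def TreewidthAtMost {V : Type} (G : SimpleGraph V) (w : ℤ) : Prop :=
  ∃ (T : Type) (τ : SimpleGraph T) (X : T → Set V),
    IsTreeDecomp G τ X ∧ ∀ t, ((X t).ncard : ℤ) ≤ w + 1

/-- `H` is a minor of `G`: there is a family of nonempty, pairwise disjoint, connected
branch sets in `G`, one for each vertex of `H`, with edges of `H` realized by edges of `G`. -/
def IsMinorOf {W V : Type} (H : SimpleGraph W) (G : SimpleGraph V) : Prop :=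
  ∃ f : W → Set V, (∀ w, (f w).Nonempty) ∧ (∀ w, (G.induce (f w)).Connected) ∧
    (Pairwise fun w₁ w₂ => Disjoint (f w₁) (f w₂)) ∧
    ∀ ⦃w₁ w₂⦄, H.Adj w₁ w₂ → ∃ u ∈ f w₁, ∃ x ∈ f w₂, G.Adj u x

/-- `F⁺`: the graph obtained from `F` by adding a new apex vertex adjacent to all of `F`. -/
def addApex {α : Type} (F : SimpleGraph α) : SimpleGraph (Option α) :=
  SimpleGraph.fromRel (fun a b => (a = none ∧ b ≠ none) ∨
    ∃ x y, a = some x ∧ b = some y ∧ F.Adj x y)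

/-- The neighbourhood `N_G(X)` of a vertex set `X`. -/
def nbhd {V : Type} (G : SimpleGraph V) (X : Set V) : Set V :=
  {v | v ∉ X ∧ ∃ u ∈ X, G.Adj u v}

section helpers

lemma support_getElem_eq {V : Type} {G : SimpleGraph V} {u v : V} (p : G.Walk u v) :
    ∀ i : ℕ, ∀ hi : i < p.support.length, p.support[i] = p.getVert i := by
  induction p with
  | nil =>
    intro i hi
    simp only [SimpleGraph.Walk.support_nil, List.length_singleton] at hi
    interval_cases i
    simp [SimpleGraph.Walk.getVert_zero]
  | cons h q ih =>
    intro i hi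
    cases i with
    | zero => simp [SimpleGraph.Walk.support_cons, SimpleGraph.Walk.getVert_zero]
    | succ j =>
      simp only [SimpleGraph.Walk.support_cons, SimpleGraph.Walk.getVert_cons_succ]
      rw [List.getElem_cons_succ]
      exact ih j (by simpa [SimpleGraph.Walk.support_cons] using hi)

lemma tail_getElem_eq {V : Type} {G : SimpleGraph V} {u v : V} (p : G.Walk u v)
    (j : ℕ) (hj : j < p.support.tail.length) : p.support.tail[j] = p.getVert (j + 1) := by
  rw [List.getElem_tail]
  exact support_getElem_eq p (j + 1) (by simp [List.length_tail] at hj ⊢; omega)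

lemma getVert_mem_tail {V : Type} {G : SimpleGraph V} {u v : V} (p : G.Walk u v)
    {i : ℕ} (h1 : 1 ≤ i) (h2 : i ≤ p.length) : p.getVert i ∈ p.support.tail := by
  have hlen : p.support.length = p.length + 1 := p.length_support
  have hi : i - 1 < p.support.tail.length := by
    simp [List.length_tail, hlen]; omega
  have h := tail_getElem_eq p (i - 1) hi
  rw [show i - 1 + 1 = i from by omega] at h
  rw [← h]
  exact List.getElem_mem _

lemma cycle_getVert_inj {V : Type} {G : SimpleGraph V} {v : V} {p : G.Walk v v}
    (hp : p.IsCycle) {s t : ℕ} (hs : s < p.length) (ht : t < p.length)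
    (heq : p.getVert s = p.getVert t) : s = t := by
  have hnd : p.support.tail.Nodup := hp.2
  have hlen : p.support.length = p.length + 1 := p.length_support
  have htl : p.support.tail.length = p.length := by simp [List.length_tail, hlen]
  have key : ∀ a b : ℕ, 1 ≤ a → a ≤ p.length → 1 ≤ b → b ≤ p.length →
      p.getVert a = p.getVert b → a = b := by
    intro a b ha1 ha2 hb1 hb2 hab
    have hga := tail_getElem_eq p (a - 1) (by omega)
    have hgb := tail_getElem_eq p (b - 1) (by omega)
    rw [show a - 1 + 1 = a from by omega] at hga
    rw [show b - 1 + 1 = b from by omega] at hgb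
    have : a - 1 = b - 1 := by
      rw [← List.Nodup.getElem_inj_iff hnd]
      rw [hga, hgb]; exact hab
      all_goals omega
    omega
  have h0 : p.getVert 0 = p.getVert p.length := by
    rw [p.getVert_zero, p.getVert_length]
  rcases Nat.eq_zero_or_pos s with rfl | hs1
  · rcases Nat.eq_zero_or_pos t with rfl | ht1
    · rfl
    · exfalso
      have := key t p.length ht1 (le_of_lt ht) (by omega) le_rfl (by rw [← heq, h0])
      omega
  · rcases Nat.eq_zero_or_pos t with rfl | ht1
    · exfalso
      have := key s p.length hs1 (le_of_lt hs) (by omega) le_rfl (by rw [heq, h0])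
      omega
    · exact key s t hs1 (le_of_lt hs) ht1 (le_of_lt ht) heq

lemma closed_mem_support_iff_tail {V : Type} {G : SimpleGraph V} {v : V} (p : G.Walk v v)
    (hl : 1 ≤ p.length) (z : V) : z ∈ p.support ↔ z ∈ p.support.tail := by
  constructor
  · intro hz
    rcases p.mem_support_iff.mp hz with rfl | h
    · have := getVert_mem_tail p (i := p.length) hl le_rfl
      rwa [p.getVert_length] at this
    · exact h
  · exact fun h => List.mem_of_mem_tail h

lemma induce_chain_connected {V : Type} (G : SimpleGraph V) (d : ℕ → V) (a b : ℕ)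
    (hab : a < b) (hadj : ∀ t, a ≤ t → t + 1 < b → G.Adj (d t) (d (t + 1))) :
    (G.induce (d '' Set.Ico a b)).Connected := by
  have hmem : ∀ t, a ≤ t → t < b → d t ∈ d '' Set.Ico a b :=
    fun t h1 h2 => ⟨t, ⟨h1, h2⟩, rfl⟩
  have key : ∀ t (h1 : a ≤ t) (h2 : t < b),
      (G.induce (d '' Set.Ico a b)).Reachable ⟨d a, hmem a le_rfl hab⟩ ⟨d t, hmem t h1 h2⟩ := by
    intro t h1
    induction t, h1 using Nat.le_induction with
    | base => intro _; rfl
    | succ t ht ih =>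
      intro hb
      have htb : t < b := by omega
      refine (ih htb).trans ?_
      have : (G.induce (d '' Set.Ico a b)).Adj ⟨d t, hmem t ht htb⟩ ⟨d (t+1), hmem (t+1) (by omega) hb⟩ := by
        simp only [SimpleGraph.comap_adj, Function.Embedding.coe_subtype]
        exact hadj t ht hb
      exact this.reachable
  haveI : Nonempty (d '' Set.Ico a b) := ⟨⟨d a, hmem a le_rfl hab⟩⟩
  refine ⟨fun z w => ?_⟩
  obtain ⟨z, hz⟩ := z
  obtain ⟨w, hw⟩ := w
  obtain ⟨s, ⟨hs1, hs2⟩, rfl⟩ := hz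
  obtain ⟨t, ⟨ht1, ht2⟩, rfl⟩ := hw
  exact (key s hs1 hs2).symm.trans (key t ht1 ht2)

end helpers

/-- if `G` is 2-connected with no `k`-wheel minor, `C` is a cycle or edge of
`G` with at most `k−1` vertices, `C′` is a cycle of `G` with `V(C) ⊆ V(C′)`, and `M` is a
connected subgraph of `G` disjoint from `C′` with `N_G(V(M)) ⊆ V(C′)`, then
`|N_G(V(M))| ≤ k − 1`. -/
theorem stmt12 (k : ℕ) (hk : 3 ≤ k) {V : Type} [Fintype V] (G : SimpleGraph V)
    (h2conn : G.Connected ∧ ∀ x : V, (G.induce {u | u ≠ x}).Connected)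
    (hG : ¬ IsMinorOf (addApex (cycleGraph k)) G)
    (Cset : Set V)
    (hC : (∃ u v, G.Adj u v ∧ Cset = {u, v}) ∨
      ∃ (x : V) (wlk : G.Walk x x), wlk.IsCycle ∧ wlk.length ≤ k - 1 ∧
        Cset = {y | y ∈ wlk.support})
    (x' : V) (C' : G.Walk x' x') (hC' : C'.IsCycle)
    (hCC' : Cset ⊆ {y | y ∈ C'.support})
    (VM : Set V) (hMconn : (G.induce VM).Connected)
    (hMdisj : VM ∩ {y | y ∈ C'.support} = ∅)
    (hMnbhd : nbhd G VM ⊆ {y | y ∈ C'.support}) :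
    (nbhd G VM).ncard ≤ k - 1 := by
  classical
  by_contra hcon
  push_neg at hcon
  set N := nbhd G VM with hN
  have hkN : k ≤ N.ncard := by omega
  have hNne : N.Nonempty := Set.nonempty_of_ncard_ne_zero (by omega)
  obtain ⟨y, hy⟩ := hNne
  have hysup : y ∈ C'.support := hMnbhd hy
  set p := C'.rotate y hysup with hp_def
  have hp : p.IsCycle := hC'.rotate hysup
  have hn : 3 ≤ p.length := hp.three_le_length
  have hC'l : 1 ≤ C'.length := by have := hC'.three_le_length; omega
  have hpl : 1 ≤ p.length := by omega
  have hrot : p.support.tail ~r C'.support.tail := C'.support_rotate y hysup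
  have hsup : ∀ z, z ∈ p.support ↔ z ∈ C'.support := by
    intro z
    rw [closed_mem_support_iff_tail p hpl, closed_mem_support_iff_tail C' hC'l, hrot.mem_iff]
  set d : ℕ → V := p.getVert with hd_def
  have hd0 : d 0 = y := p.getVert_zero
  have hdn : d p.length = y := p.getVert_length
  have hadj : ∀ t, t < p.length → G.Adj (d t) (d (t + 1)) := fun t ht => p.adj_getVert_succ ht
  have hinj : ∀ s t, s < p.length → t < p.length → d s = d t → s = t :=
    fun s t hs ht => cycle_getVert_inj hp hs ht
  have hsupd : ∀ t, t < p.length → d t ∈ p.support := by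
    intro t ht
    rw [SimpleGraph.Walk.mem_support_iff_exists_getVert]
    exact ⟨t, rfl, by omega⟩
  have hmemsup : ∀ z, z ∈ p.support → ∃ t, t < p.length ∧ d t = z := by
    intro z hz
    obtain ⟨m, hm1, hm2⟩ := SimpleGraph.Walk.mem_support_iff_exists_getVert.mp hz
    rcases Nat.lt_or_ge m p.length with h | h
    · exact ⟨m, h, hm1⟩
    · have : m = p.length := by omega
      subst this
      exact ⟨0, by omega, by rw [hd0, ← hdn]; exact hm1⟩
  have hNsup : ∀ z ∈ N, ∃ t, t < p.length ∧ d t = z :=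
    fun z hz => hmemsup z ((hsup z).mpr (hMnbhd hz))
  have hVMd : ∀ t, t < p.length → d t ∉ VM := by
    intro t ht hvm
    have : d t ∈ VM ∩ {y | y ∈ C'.support} := ⟨hvm, (hsup _).mp (hsupd t ht)⟩
    rw [hMdisj] at this
    exact this
  set S : Finset ℕ := (Finset.range p.length).filter (fun t => d t ∈ N) with hS_def
  have hS0 : (0 : ℕ) ∈ S := by
    rw [hS_def, Finset.mem_filter, Finset.mem_range]
    exact ⟨by omega, by rw [hd0]; exact hy⟩
  have hkS : k ≤ S.card := by
    have h1 : N ⊆ ↑(S.image d) := by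
      intro z hz
      obtain ⟨t, ht, rfl⟩ := hNsup z hz
      simp only [Finset.coe_image, Set.mem_image, Finset.mem_coe]
      exact ⟨t, by rw [hS_def, Finset.mem_filter, Finset.mem_range]; exact ⟨ht, hz⟩, rfl⟩
    calc k ≤ N.ncard := hkN
      _ ≤ (↑(S.image d) : Set V).ncard := Set.ncard_le_ncard h1 (Set.toFinite _)
      _ = (S.image d).card := Set.ncard_coe_finset _
      _ ≤ S.card := Finset.card_image_le
  set e := S.orderIsoOfFin rfl with he_def
  set i : Fin k → ℕ := fun j => (e (Fin.castLE hkS j) : ℕ) with hi_def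
  have hiS : ∀ j, i j ∈ S := fun j => (e (Fin.castLE hkS j)).2
  have hiN : ∀ j, d (i j) ∈ N := fun j => (Finset.mem_filter.mp (hiS j)).2
  have hin : ∀ j, i j < p.length := fun j => Finset.mem_range.mp (Finset.mem_filter.mp (hiS j)).1
  have himono : ∀ j1 j2 : Fin k, j1.val < j2.val → i j1 < i j2 := by
    intro j1 j2 h
    have h1 : Fin.castLE hkS j1 < Fin.castLE hkS j2 := by rw [Fin.lt_def]; exact h
    exact Subtype.coe_lt_coe.mpr (e.strictMono h1)
  have hk0 : (0 : ℕ) < k := by omega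
  have hi0 : i ⟨0, hk0⟩ = 0 := by
    obtain ⟨x0, hx0⟩ := e.surjective ⟨0, hS0⟩
    have h1 : e (Fin.castLE hkS ⟨0, hk0⟩) ≤ e x0 := e.monotone (by rw [Fin.le_def]; exact Nat.zero_le _)
    have h2 : (e x0 : ℕ) = 0 := by rw [hx0]
    have h3 : i ⟨0, hk0⟩ ≤ (e x0 : ℕ) := Subtype.coe_le_coe.mpr h1
    omega
  set nb : Fin k → ℕ := fun j => if h : j.val + 1 < k then i ⟨j.val + 1, h⟩ else p.length
    with hnb_def
  have hnb_le : ∀ j, nb j ≤ p.length := by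
    intro j
    simp only [hnb_def]
    split
    · exact (hin _).le
    · exact le_rfl
  have hlt : ∀ j, i j < nb j := by
    intro j
    simp only [hnb_def]
    split
    · exact himono _ _ (by simp)
    · exact hin j
  have hnb_ord : ∀ j1 j2 : Fin k, j1.val < j2.val → nb j1 ≤ i j2 := by
    intro j1 j2 h
    have h2 : j1.val + 1 < k := by have := j2.isLt; omega
    simp only [hnb_def]
    simp only [dif_pos h2]
    rcases Nat.eq_or_lt_of_le (Nat.succ_le_of_lt h) with heq | hlt'
    · have : (⟨j1.val + 1, h2⟩ : Fin k) = j2 := Fin.ext heq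
      rw [this]
    · exact (himono _ _ hlt').le
  set A : Fin k → Set V := fun j => d '' Set.Ico (i j) (nb j) with hA_def
  have hmemA : ∀ (j : Fin k) (t : ℕ), i j ≤ t → t < nb j → d t ∈ A j :=
    fun j t h1 h2 => ⟨t, ⟨h1, h2⟩, rfl⟩
  have hubAdj : ∀ j : Fin k, ∃ u ∈ VM, G.Adj u (d (i j)) := fun j => (hiN j).2
  have ring : ∀ j1 j2 : Fin k, (j2 - j1).val = 1 → ∃ u ∈ A j1, ∃ x ∈ A j2, G.Adj u x := by
    intro j1 j2 hsub
    have hj1 := j1.isLt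
    have hj2' := j2.isLt
    have hj2 : j2.val = (j1.val + 1) % k := by
      have hv : (k - j1.val + j2.val) % k = 1 := by
        have hs : (j2 - j1).val = (k - j1.val + j2.val) % k := by
          rw [Fin.sub_def]
        rw [← hs, hsub]
      rcases Nat.lt_or_ge j2.val j1.val with h | h
      · rw [Nat.mod_eq_of_lt (by omega)] at hv
        have hj1k : j1.val + 1 = k := by omega
        rw [hj1k, Nat.mod_self]
        omega
      · have heq : k - j1.val + j2.val = (j2.val - j1.val) + k := by omega
        rw [heq, Nat.add_mod_right, Nat.mod_eq_of_lt (by omega)] at hv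
        rw [Nat.mod_eq_of_lt (by omega)]
        omega
    by_cases hcase : j1.val + 1 < k
    · have hj2eq : j2 = ⟨j1.val + 1, hcase⟩ := Fin.ext (by rw [hj2, Nat.mod_eq_of_lt hcase])
      have hnbj : nb j1 = i j2 := by
        simp only [hnb_def]
        simp only [dif_pos hcase]
        rw [hj2eq]
      have h1 : i j1 < nb j1 := hlt j1
      have hnbn : nb j1 ≤ p.length := hnb_le j1
      refine ⟨d (nb j1 - 1), hmemA j1 (nb j1 - 1) (by omega) (by omega),
        d (nb j1), ?_, ?_⟩
      · rw [hnbj]; exact hmemA j2 (i j2) le_rfl (hlt j2)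
      · have h := hadj (nb j1 - 1) (by omega)
        rwa [show nb j1 - 1 + 1 = nb j1 from by omega] at h
    · have hj1k : j1.val + 1 = k := by omega
      have hj20 : j2.val = 0 := by rw [hj2, hj1k, Nat.mod_self]
      have hj2eq : j2 = ⟨0, hk0⟩ := Fin.ext hj20
      have hnbj : nb j1 = p.length := by
        simp only [hnb_def]
        exact dif_neg (by omega)
      have hij2 : i j2 = 0 := by rw [hj2eq, hi0]
      have hij1 : i j1 < p.length := hin j1
      refine ⟨d (p.length - 1), hmemA j1 (p.length - 1) (by omega) (by omega),
        d 0, hmemA j2 0 (by omega) (by have h5 := hlt j2; omega), ?_⟩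
      have h := hadj (p.length - 1) (by omega)
      rw [show p.length - 1 + 1 = p.length from by omega] at h
      have h2 : d 0 = d p.length := by rw [hd0, hdn]
      rw [h2]
      exact h
  apply hG
  refine ⟨fun o => Option.elim o VM A, ?_, ?_, ?_, ?_⟩
  · rintro (_ | j)
    · exact Set.nonempty_coe_sort.mp hMconn.nonempty
    · exact ⟨d (i j), hmemA j (i j) le_rfl (hlt j)⟩
  · rintro (_ | j)
    · exact hMconn
    · exact induce_chain_connected G d (i j) (nb j) (hlt j)
        (fun t h1 h2 => hadj t (by have := hnb_le j; omega))
  · have hdisj2 : ∀ j1 j2 : Fin k, j1.val < j2.val → Disjoint (A j1) (A j2) := by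
      intro j1 j2 h
      rw [Set.disjoint_left]
      rintro z ⟨s, ⟨hs1, hs2⟩, rfl⟩ ⟨t, ⟨ht1, ht2⟩, hts⟩
      have hsn : s < p.length := lt_of_lt_of_le hs2 (hnb_le j1)
      have htn : t < p.length := lt_of_lt_of_le ht2 (hnb_le j2)
      have h3 := hinj t s htn hsn hts
      have h4 := hnb_ord j1 j2 h
      omega
    have hdisjVA : ∀ j, Disjoint VM (A j) := by
      intro j
      rw [Set.disjoint_right]
      rintro z ⟨t, ⟨ht1, ht2⟩, rfl⟩
      exact hVMd t (lt_of_lt_of_le ht2 (hnb_le j))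
    rintro (_ | j1) (_ | j2) hne
    · exact absurd rfl hne
    · exact hdisjVA j2
    · exact (hdisjVA j1).symm
    · have hne' : j1 ≠ j2 := fun h => hne (by rw [h])
      rcases Nat.lt_trichotomy j1.val j2.val with h | h | h
      · exact hdisj2 j1 j2 h
      · exact absurd (Fin.ext h) hne'
      · exact (hdisj2 j2 j1 h).symm
  · intro w1 w2 hadj'
    rw [addApex, SimpleGraph.fromRel_adj] at hadj'
    obtain ⟨hne, hrel⟩ := hadj'
    match w1, w2 with
    | none, none => exact absurd rfl hne
    | none, some j =>
      obtain ⟨u, hu, huadj⟩ := hubAdj j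
      exact ⟨u, hu, d (i j), hmemA j (i j) le_rfl (hlt j), huadj⟩
    | some j, none =>
      obtain ⟨u, hu, huadj⟩ := hubAdj j
      exact ⟨d (i j), hmemA j (i j) le_rfl (hlt j), u, hu, huadj.symm⟩
    | some j1, some j2 =>
      have hcyc : (cycleGraph k).Adj j1 j2 := by
        rcases hrel with (⟨h1, -⟩ | ⟨a, b, ha, hb, hab⟩) | (⟨h1, -⟩ | ⟨a, b, ha, hb, hab⟩)
        · simp at h1
        · cases ha; cases hb; exact hab
        · simp at h1
        · cases ha; cases hb; exact hab.symm
      rw [SimpleGraph.cycleGraph_adj'] at hcyc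
      rcases hcyc with h | h
      · obtain ⟨u, hu, x, hx, huxadj⟩ := ring j2 j1 h
        exact ⟨x, hx, u, hu, huxadj.symm⟩
      · exact ring j1 j2 h
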